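/- arXiv:2211.13937 — 3 statements merged into one kernel-verified Lean document; each statement's English description precedes it below -/
import Mathlib

section
/- If ‖P^π - P̂^π‖_∞ < (1-γ)/γ, then the Varga operator S^π is a contraction with respect to the supremum norm with contraction factor γ' = (γ/(1-γ))‖P^π - P̂^π‖_∞ < 1, and hence the exact OS-VI iteration V_k = S^π V_{k-1} converges to V^π with ‖V^π - V_k‖_∞ ≤ γ'^k ‖V^π - V_0‖_∞. -/
open Matrix

/-- Supremum norm on vectors. -/
noncomputable def vnorm {d : ℕ} (v : Fin d → ℝ) : ℝ := ⨆ i, |v i|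

/-- Maximum absolute row sum: the operator norm induced by the supremum norm. -/
noncomputable def mnorm {d : ℕ} (M : Matrix (Fin d) (Fin d) ℝ) : ℝ :=
  ⨆ i, ∑ j, |M i j|

/-- A row-stochastic matrix: nonnegative entries, rows summing to one. -/
def RowStochastic {d : ℕ} (P : Matrix (Fin d) (Fin d) ℝ) : Prop :=
  (∀ i j, 0 ≤ P i j) ∧ ∀ i, ∑ j, P i j = 1

/-- The Varga operator `S^π V = (I - γ P̂)⁻¹ (r + γ (P - P̂) V)`. -/
noncomputable def varga {d : ℕ} (γ : ℝ) (P Phat : Matrix (Fin d) (Fin d) ℝ)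
    (r V : Fin d → ℝ) : Fin d → ℝ :=
  ((1 - γ • Phat)⁻¹).mulVec (r + γ • ((P - Phat).mulVec V))

/-- The value function `V^π = (I - γ P)⁻¹ r`. -/
noncomputable def valueFn {d : ℕ} (γ : ℝ) (P : Matrix (Fin d) (Fin d) ℝ)
    (r : Fin d → ℝ) : Fin d → ℝ :=
  ((1 - γ • P)⁻¹).mulVec r

lemma vnorm_nonneg {d : ℕ} (v : Fin d → ℝ) : 0 ≤ vnorm v := by
  rcases Nat.eq_zero_or_pos d with h | h
  · subst h
    simp [vnorm, Real.iSup_of_isEmpty]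
  · have : Nonempty (Fin d) := ⟨⟨0, h⟩⟩
    obtain ⟨i⟩ := this
    have h := le_ciSup (Set.Finite.bddAbove (Set.finite_range fun j => |v j|)) i
    exact le_trans (abs_nonneg (v i)) h

lemma abs_le_vnorm {d : ℕ} (v : Fin d → ℝ) (i : Fin d) : |v i| ≤ vnorm v :=
  le_ciSup (Set.Finite.bddAbove (Set.finite_range fun j => |v j|)) i

lemma vnorm_le {d : ℕ} (v : Fin d → ℝ) {c : ℝ} (hc : 0 ≤ c)
    (h : ∀ i, |v i| ≤ c) : vnorm v ≤ c := by
  rcases Nat.eq_zero_or_pos d with hd | hd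
  · subst hd; simpa [vnorm, Real.iSup_of_isEmpty] using hc
  · have : Nonempty (Fin d) := ⟨⟨0, hd⟩⟩
    exact ciSup_le h

lemma vnorm_eq_zero {d : ℕ} {v : Fin d → ℝ} (h : vnorm v ≤ 0) : v = 0 := by
  funext i
  have := abs_le_vnorm v i
  have : |v i| ≤ 0 := this.trans h
  have := (abs_nonneg (v i)).antisymm this
  simpa [eq_comm, abs_eq_zero] using this

lemma mnorm_nonneg {d : ℕ} (M : Matrix (Fin d) (Fin d) ℝ) : 0 ≤ mnorm M := by
  rcases Nat.eq_zero_or_pos d with h | h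
  · subst h; simp [mnorm, Real.iSup_of_isEmpty]
  · have : Nonempty (Fin d) := ⟨⟨0, h⟩⟩
    obtain ⟨i⟩ := this
    have h := le_ciSup (Set.Finite.bddAbove (Set.finite_range fun i => ∑ j, |M i j|)) i
    exact le_trans (Finset.sum_nonneg fun j _ => abs_nonneg (M i j)) h

lemma rowsum_le_mnorm {d : ℕ} (M : Matrix (Fin d) (Fin d) ℝ) (i : Fin d) :
    ∑ j, |M i j| ≤ mnorm M :=
  le_ciSup (Set.Finite.bddAbove (Set.finite_range fun i => ∑ j, |M i j|)) i

lemma vnorm_mulVec_le {d : ℕ} (M : Matrix (Fin d) (Fin d) ℝ) (v : Fin d → ℝ) :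
    vnorm (M.mulVec v) ≤ mnorm M * vnorm v := by
  refine vnorm_le _ (mul_nonneg (mnorm_nonneg M) (vnorm_nonneg v)) fun i => ?_
  calc |(M.mulVec v) i| = |∑ j, M i j * v j| := rfl
    _ ≤ ∑ j, |M i j * v j| := Finset.abs_sum_le_sum_abs _ _
    _ = ∑ j, |M i j| * |v j| := by simp [abs_mul]
    _ ≤ ∑ j, |M i j| * vnorm v :=
        Finset.sum_le_sum fun j _ => mul_le_mul_of_nonneg_left (abs_le_vnorm v j) (abs_nonneg _)
    _ = (∑ j, |M i j|) * vnorm v := by rw [Finset.sum_mul]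
    _ ≤ mnorm M * vnorm v :=
        mul_le_mul_of_nonneg_right (rowsum_le_mnorm M i) (vnorm_nonneg v)

lemma vnorm_add_le {d : ℕ} (u v : Fin d → ℝ) : vnorm (u + v) ≤ vnorm u + vnorm v := by
  refine vnorm_le _ (add_nonneg (vnorm_nonneg u) (vnorm_nonneg v)) fun i => ?_
  calc |(u + v) i| = |u i + v i| := rfl
    _ ≤ |u i| + |v i| := abs_add_le _ _
    _ ≤ vnorm u + vnorm v := add_le_add (abs_le_vnorm u i) (abs_le_vnorm v i)

lemma mnorm_stochastic_le_one {d : ℕ} {Q : Matrix (Fin d) (Fin d) ℝ}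
    (hQ : RowStochastic Q) : mnorm Q ≤ 1 := by
  rcases Nat.eq_zero_or_pos d with h | h
  · subst h; simp [mnorm, Real.iSup_of_isEmpty]
  · have : Nonempty (Fin d) := ⟨⟨0, h⟩⟩
    refine ciSup_le fun i => ?_
    have : ∑ j, |Q i j| = ∑ j, Q i j :=
      Finset.sum_congr rfl fun j _ => abs_of_nonneg (hQ.1 i j)
    rw [this, hQ.2 i]

/-- Key a priori bound: if `(1 - γ Q) w = x` with `Q` row-stochastic, then
`(1-γ)‖w‖ ≤ ‖x‖`. -/
lemma key_bound {d : ℕ} {γ : ℝ} (hγ0 : 0 ≤ γ)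
    {Q : Matrix (Fin d) (Fin d) ℝ} (hQ : RowStochastic Q)
    (w x : Fin d → ℝ) (h : (1 - γ • Q).mulVec w = x) :
    (1 - γ) * vnorm w ≤ vnorm x := by
  have hw : w = x + γ • Q.mulVec w := by
    have := h
    rw [Matrix.sub_mulVec, Matrix.one_mulVec, Matrix.smul_mulVec] at this
    funext i
    have := congrFun this i
    simp only [Pi.sub_apply] at this
    simp only [Pi.add_apply, Pi.smul_apply, smul_eq_mul] at *
    linarith [this]
  have h1 : vnorm w ≤ vnorm x + γ * vnorm (Q.mulVec w) := by
    calc vnorm w = vnorm (x + γ • Q.mulVec w) := by rw [← hw]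
      _ ≤ vnorm x + vnorm (γ • Q.mulVec w) := vnorm_add_le _ _
      _ ≤ vnorm x + γ * vnorm (Q.mulVec w) := by
          refine add_le_add_right (vnorm_le _ (mul_nonneg hγ0 (vnorm_nonneg _)) fun i => ?_) _
          simp only [Pi.smul_apply, smul_eq_mul, abs_mul, abs_of_nonneg hγ0]
          exact mul_le_mul_of_nonneg_left (abs_le_vnorm _ i) hγ0
  have h2 : vnorm (Q.mulVec w) ≤ vnorm w := by
    calc vnorm (Q.mulVec w) ≤ mnorm Q * vnorm w := vnorm_mulVec_le _ _
      _ ≤ 1 * vnorm w :=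
        mul_le_mul_of_nonneg_right (mnorm_stochastic_le_one hQ) (vnorm_nonneg _)
      _ = vnorm w := one_mul _
  nlinarith [vnorm_nonneg w]

lemma isUnit_det {d : ℕ} {γ : ℝ} (hγ0 : 0 ≤ γ) (hγ1 : γ < 1)
    {Q : Matrix (Fin d) (Fin d) ℝ} (hQ : RowStochastic Q) :
    IsUnit (1 - γ • Q).det := by
  rw [isUnit_iff_ne_zero]
  intro hdet
  obtain ⟨v, hv0, hv⟩ := (Matrix.exists_mulVec_eq_zero_iff).2 hdet
  have := key_bound hγ0 hQ v 0 hv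
  have hv0' : vnorm (0 : Fin d → ℝ) = 0 := by
    have h1 : vnorm (0 : Fin d → ℝ) ≤ 0 := vnorm_le _ le_rfl (by simp)
    exact h1.antisymm (vnorm_nonneg _)
  rw [hv0'] at this
  have : vnorm v ≤ 0 := by nlinarith
  exact hv0 (vnorm_eq_zero this)

/-- If `‖P - P̂‖_∞ < (1-γ)/γ` (equivalently `γ‖P - P̂‖_∞ < 1 - γ`), then `S^π` is a
`γ'`-contraction in sup norm with `γ' = (γ/(1-γ))‖P - P̂‖_∞ < 1`, and exact OS-VI
converges to `V^π` at rate `γ'^k`. -/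
theorem osvi_pe_contraction {d : ℕ} (γ : ℝ) (hγ0 : 0 ≤ γ) (hγ1 : γ < 1)
    (P Phat : Matrix (Fin d) (Fin d) ℝ)
    (hP : RowStochastic P) (hPhat : RowStochastic Phat)
    (r : Fin d → ℝ)
    (herr : γ * mnorm (P - Phat) < 1 - γ) :
    γ / (1 - γ) * mnorm (P - Phat) < 1 ∧
    (∀ V₁ V₂ : Fin d → ℝ,
      vnorm (varga γ P Phat r V₁ - varga γ P Phat r V₂) ≤
        (γ / (1 - γ) * mnorm (P - Phat)) * vnorm (V₁ - V₂)) ∧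
    ∀ V : ℕ → Fin d → ℝ, (∀ k, V (k + 1) = varga γ P Phat r (V k)) →
      ∀ k, vnorm (valueFn γ P r - V k) ≤
        (γ / (1 - γ) * mnorm (P - Phat)) ^ k * vnorm (valueFn γ P r - V 0) := by
  have h1γ : (0:ℝ) < 1 - γ := by linarith
  set ε := mnorm (P - Phat) with hε
  have hε0 : 0 ≤ ε := mnorm_nonneg _
  set γ' := γ / (1 - γ) * ε with hγ'
  have hγ'0 : 0 ≤ γ' := mul_nonneg (div_nonneg hγ0 h1γ.le) hε0
  have hγ'1 : γ' < 1 := by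
    rw [hγ', div_mul_eq_mul_div, div_lt_one h1γ]
    linarith
  have hdetA : IsUnit (1 - γ • Phat).det := isUnit_det hγ0 hγ1 hPhat
  have hdetB : IsUnit (1 - γ • P).det := isUnit_det hγ0 hγ1 hP
  -- contraction
  have hcontr : ∀ V₁ V₂ : Fin d → ℝ,
      vnorm (varga γ P Phat r V₁ - varga γ P Phat r V₂) ≤ γ' * vnorm (V₁ - V₂) := by
    intro V₁ V₂
    set A := (1 - γ • Phat) with hA
    set D := varga γ P Phat r V₁ - varga γ P Phat r V₂ with hD
    have hDeq : D = A⁻¹.mulVec (γ • ((P - Phat).mulVec (V₁ - V₂))) := by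
      rw [hD]
      show A⁻¹.mulVec (r + γ • ((P - Phat).mulVec V₁)) -
        A⁻¹.mulVec (r + γ • ((P - Phat).mulVec V₂)) = _
      rw [Matrix.mulVec_add, Matrix.mulVec_add, Matrix.mulVec_smul, Matrix.mulVec_smul,
        Matrix.mulVec_smul]
      have : (P - Phat).mulVec (V₁ - V₂) = (P - Phat).mulVec V₁ - (P - Phat).mulVec V₂ := by
        funext i
        simp [Matrix.mulVec, dotProduct, Finset.sum_sub_distrib, mul_sub]
      rw [this, Matrix.mulVec_sub, smul_sub]
      abel
    have hAD : A.mulVec D = γ • ((P - Phat).mulVec (V₁ - V₂)) := by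
      rw [hDeq, Matrix.mulVec_mulVec, Matrix.mul_nonsing_inv _ hdetA, Matrix.one_mulVec]
    have hkb := key_bound hγ0 hPhat D _ hAD
    have hrhs : vnorm (γ • ((P - Phat).mulVec (V₁ - V₂))) ≤ γ * (ε * vnorm (V₁ - V₂)) := by
      refine vnorm_le _ (mul_nonneg hγ0 (mul_nonneg hε0 (vnorm_nonneg _))) fun i => ?_
      simp only [Pi.smul_apply, smul_eq_mul, abs_mul, abs_of_nonneg hγ0]
      refine mul_le_mul_of_nonneg_left ?_ hγ0
      exact (abs_le_vnorm _ i).trans (vnorm_mulVec_le _ _)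
    have : (1 - γ) * vnorm D ≤ γ * (ε * vnorm (V₁ - V₂)) := hkb.trans hrhs
    rw [hγ', div_mul_eq_mul_div, div_mul_eq_mul_div, le_div_iff₀ h1γ]
    nlinarith
  refine ⟨hγ'1, hcontr, ?_⟩
  -- fixed point
  have hfix : varga γ P Phat r (valueFn γ P r) = valueFn γ P r := by
    set Vπ := valueFn γ P r with hVπ
    have hBV : (1 - γ • P).mulVec Vπ = r := by
      rw [hVπ, valueFn, Matrix.mulVec_mulVec, Matrix.mul_nonsing_inv _ hdetB,
        Matrix.one_mulVec]
    have harg : r + γ • ((P - Phat).mulVec Vπ) = (1 - γ • Phat).mulVec Vπ := by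
      have h2 : (1 - γ • Phat) = (1 - γ • P) + γ • (P - Phat) := by
        rw [smul_sub]; abel
      rw [h2, Matrix.add_mulVec, hBV, Matrix.smul_mulVec]
    rw [varga, harg, Matrix.mulVec_mulVec, Matrix.nonsing_inv_mul _ hdetA,
      Matrix.one_mulVec]
  intro V hV k
  induction k with
  | zero => simp
  | succ k ih =>
    have hstep : vnorm (valueFn γ P r - V (k + 1)) ≤ γ' * vnorm (valueFn γ P r - V k) := by
      have heq : valueFn γ P r - V (k + 1) =
          varga γ P Phat r (valueFn γ P r) - varga γ P Phat r (V k) := by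
        rw [hV k, hfix]
      rw [heq]
      exact hcontr _ _
    calc vnorm (valueFn γ P r - V (k + 1)) ≤ γ' * vnorm (valueFn γ P r - V k) := hstep
      _ ≤ γ' * (γ' ^ k * vnorm (valueFn γ P r - V 0)) :=
          mul_le_mul_of_nonneg_left ih hγ'0
      _ = γ' ^ (k + 1) * vnorm (valueFn γ P r - V 0) := by ring
end

section
/- (Weighted L_4 bound on G^π) For any function v: X → ℝ, ‖G^π v‖_{4,ρ} ≤ (γ/(1-γ)) √(Ĉ^π(ρ) · χ²_ρ(P^π ‖ P̂^π)) · ‖v‖_{4,ρ}, where G^π = (I - γ P̂^π)^{-1} γ (P^π - P̂^π). -/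
open Matrix

/-- The discounted future-state distribution
`η̂^π(y|x) = (1-γ) ∑_{t≥0} γ^t (P̂^π)^t(y|x)`. -/
noncomputable def eta {d : ℕ} (γ : ℝ) (Phat : Matrix (Fin d) (Fin d) ℝ)
    (x y : Fin d) : ℝ :=
  (1 - γ) * ∑' t : ℕ, γ ^ t * (Phat ^ t) x y

/-- The weighted `L₄(ρ)` norm: `‖f‖_{4,ρ} = (∑_x ρ(x) f(x)⁴)^{1/4}`. -/
noncomputable def norm4 {d : ℕ} (ρ : Fin d → ℝ) (f : Fin d → ℝ) : ℝ :=
  (∑ x, ρ x * f x ^ 4) ^ ((1 : ℝ) / 4)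

/-- The squared concentrability coefficient
`Ĉ^π(ρ)² = (1/γ²) ∑_x ρ(x) (max_y η̂^π(y|x)/ρ(y))³`. -/
noncomputable def Csq {d : ℕ} (γ : ℝ) (Phat : Matrix (Fin d) (Fin d) ℝ)
    (ρ : Fin d → ℝ) : ℝ :=
  1 / γ ^ 2 * ∑ x, ρ x * (⨆ y, eta γ Phat x y / ρ y) ^ 3

/-- The weighted chi-squared divergence
`χ²_ρ(P^π ‖ P̂^π) = ∑_x ρ(x) ∑_y (P̂(y|x) - P(y|x))²/P̂(y|x)`. -/
noncomputable def chiSq {d : ℕ} (ρ : Fin d → ℝ)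
    (P Phat : Matrix (Fin d) (Fin d) ℝ) : ℝ :=
  ∑ x, ρ x * ∑ y, (Phat x y - P x y) ^ 2 / Phat x y

lemma RowStochastic.mul {d : ℕ} {A B : Matrix (Fin d) (Fin d) ℝ}
    (hA : RowStochastic A) (hB : RowStochastic B) : RowStochastic (A * B) := by
  constructor
  · intro i j
    rw [Matrix.mul_apply]
    exact Finset.sum_nonneg fun k _ => mul_nonneg (hA.1 i k) (hB.1 k j)
  · intro i
    simp only [Matrix.mul_apply]
    rw [Finset.sum_comm]
    have : ∀ k, ∑ j, A i k * B k j = A i k := by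
      intro k; rw [← Finset.mul_sum, hB.2 k, mul_one]
    rw [Finset.sum_congr rfl fun k _ => this k, hA.2 i]

lemma RowStochastic.pow {d : ℕ} {A : Matrix (Fin d) (Fin d) ℝ}
    (hA : RowStochastic A) (t : ℕ) : RowStochastic (A ^ t) := by
  induction t with
  | zero =>
    constructor
    · intro i j; simp [Matrix.one_apply]; split <;> norm_num
    · intro i; simp [Matrix.one_apply]
  | succ n ih => rw [pow_succ]; exact ih.mul hA

lemma RowStochastic.entry_le_one {d : ℕ} {A : Matrix (Fin d) (Fin d) ℝ}
    (hA : RowStochastic A) (i j : Fin d) : A i j ≤ 1 := by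
  calc A i j ≤ ∑ k, A i k :=
        Finset.single_le_sum (fun k _ => hA.1 i k) (Finset.mem_univ j)
    _ = 1 := hA.2 i

noncomputable def Mker {d : ℕ} (γ : ℝ) (Phat : Matrix (Fin d) (Fin d) ℝ) :
    Matrix (Fin d) (Fin d) ℝ :=
  Matrix.of fun x y => ∑' t : ℕ, γ ^ t * (Phat ^ t) x y

section Mker
variable {d : ℕ} {γ : ℝ} {Phat : Matrix (Fin d) (Fin d) ℝ}
  (hγ0 : 0 < γ) (hγ1 : γ < 1) (hPhat : RowStochastic Phat)
include hγ0 hγ1 hPhat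

lemma summable_aux (k : ℕ) (x y : Fin d) :
    Summable (fun t : ℕ => γ ^ t * (Phat ^ (t + k)) x y) := by
  refine Summable.of_nonneg_of_le
    (fun t => mul_nonneg (pow_nonneg hγ0.le t) ((hPhat.pow (t+k)).1 x y))
    (fun t => ?_) (summable_geometric_of_lt_one hγ0.le hγ1)
  calc γ ^ t * (Phat ^ (t+k)) x y ≤ γ ^ t * 1 :=
        mul_le_mul_of_nonneg_left ((hPhat.pow (t+k)).entry_le_one x y)
          (pow_nonneg hγ0.le t)
    _ = γ ^ t := mul_one _

lemma mker_nonneg (x y : Fin d) : 0 ≤ Mker γ Phat x y :=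
  tsum_nonneg fun t => mul_nonneg (pow_nonneg hγ0.le t) ((hPhat.pow t).1 x y)

lemma mker_rowsum (x : Fin d) : ∑ y, Mker γ Phat x y = (1 - γ)⁻¹ := by
  have hs : ∀ y ∈ Finset.univ, Summable (fun t : ℕ => γ ^ t * (Phat ^ t) x y) := by
    intro y _; simpa using summable_aux hγ0 hγ1 hPhat 0 x y
  calc ∑ y, Mker γ Phat x y
      = ∑' t : ℕ, ∑ y, γ ^ t * (Phat ^ t) x y := (Summable.tsum_finsetSum hs).symm
    _ = ∑' t : ℕ, γ ^ t := by
        refine tsum_congr fun t => ?_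
        rw [← Finset.mul_sum, (hPhat.pow t).2 x, mul_one]
    _ = (1 - γ)⁻¹ := tsum_geometric_of_lt_one hγ0.le hγ1

lemma mker_shift (x y : Fin d) :
    Mker γ Phat x y
      = (1 : Matrix (Fin d) (Fin d) ℝ) x y
        + γ * ∑' t : ℕ, γ ^ t * (Phat ^ (t + 1)) x y := by
  have h0 := Summable.tsum_eq_zero_add (by simpa using summable_aux hγ0 hγ1 hPhat 0 x y)
  have : (fun t : ℕ => γ ^ (t + 1) * (Phat ^ (t + 1)) x y)
      = fun t : ℕ => γ * (γ ^ t * (Phat ^ (t + 1)) x y) := by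
    funext t; ring
  show (∑' t : ℕ, γ ^ t * (Phat ^ t) x y) = _
  rw [h0, this, tsum_mul_left]
  simp [Matrix.one_apply]

lemma mker_mul_phat (x y : Fin d) :
    ∑ z, Mker γ Phat x z * Phat z y = ∑' t : ℕ, γ ^ t * (Phat ^ (t + 1)) x y := by
  have h1 : ∀ z, Mker γ Phat x z * Phat z y
      = ∑' t : ℕ, γ ^ t * (Phat ^ t) x z * Phat z y := by
    intro z; exact (tsum_mul_right).symm
  have hs : ∀ z ∈ Finset.univ,
      Summable (fun t : ℕ => γ ^ t * (Phat ^ t) x z * Phat z y) := by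
    intro z _
    exact (by simpa using summable_aux hγ0 hγ1 hPhat 0 x z : Summable _).mul_right _
  calc ∑ z, Mker γ Phat x z * Phat z y
      = ∑ z, ∑' t : ℕ, γ ^ t * (Phat ^ t) x z * Phat z y :=
        Finset.sum_congr rfl fun z _ => h1 z
    _ = ∑' t : ℕ, ∑ z, γ ^ t * (Phat ^ t) x z * Phat z y := (Summable.tsum_finsetSum hs).symm
    _ = ∑' t : ℕ, γ ^ t * (Phat ^ (t + 1)) x y := by
        refine tsum_congr fun t => ?_
        rw [pow_succ, Matrix.mul_apply, Finset.mul_sum]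
        exact Finset.sum_congr rfl fun z _ => by ring

lemma phat_mul_mker (x y : Fin d) :
    ∑ z, Phat x z * Mker γ Phat z y = ∑' t : ℕ, γ ^ t * (Phat ^ (t + 1)) x y := by
  have h1 : ∀ z, Phat x z * Mker γ Phat z y
      = ∑' t : ℕ, Phat x z * (γ ^ t * (Phat ^ t) z y) := by
    intro z; exact (tsum_mul_left).symm
  have hs : ∀ z ∈ Finset.univ,
      Summable (fun t : ℕ => Phat x z * (γ ^ t * (Phat ^ t) z y)) := by
    intro z _
    exact (by simpa using summable_aux hγ0 hγ1 hPhat 0 z y : Summable _).mul_left _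
  calc ∑ z, Phat x z * Mker γ Phat z y
      = ∑ z, ∑' t : ℕ, Phat x z * (γ ^ t * (Phat ^ t) z y) :=
        Finset.sum_congr rfl fun z _ => h1 z
    _ = ∑' t : ℕ, ∑ z, Phat x z * (γ ^ t * (Phat ^ t) z y) := (Summable.tsum_finsetSum hs).symm
    _ = ∑' t : ℕ, γ ^ t * (Phat ^ (t + 1)) x y := by
        refine tsum_congr fun t => ?_
        rw [pow_succ', Matrix.mul_apply, Finset.mul_sum]
        exact Finset.sum_congr rfl fun z _ => by ring

lemma mker_inv : (1 - γ • Phat)⁻¹ = Mker γ Phat := by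
  refine Matrix.inv_eq_right_inv ?_
  ext x y
  rw [Matrix.mul_apply]
  have : ∀ z, (1 - γ • Phat) x z * Mker γ Phat z y
      = (1 : Matrix (Fin d) (Fin d) ℝ) x z * Mker γ Phat z y
        - γ * (Phat x z * Mker γ Phat z y) := by
    intro z
    simp [Matrix.sub_apply, Matrix.smul_apply, smul_eq_mul]
    ring
  rw [Finset.sum_congr rfl fun z _ => this z, Finset.sum_sub_distrib,
    ← Finset.mul_sum, phat_mul_mker hγ0 hγ1 hPhat]
  have h1 : ∑ z, (1 : Matrix (Fin d) (Fin d) ℝ) x z * Mker γ Phat z y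
      = Mker γ Phat x y := by
    simp [Matrix.one_apply]
  rw [h1, mker_shift hγ0 hγ1 hPhat x y]
  ring

lemma mker_phat_le (x y : Fin d) :
    ∑ z, Mker γ Phat x z * Phat z y ≤ Mker γ Phat x y / γ := by
  rw [le_div_iff₀ hγ0, mker_mul_phat hγ0 hγ1 hPhat,
    mker_shift hγ0 hγ1 hPhat x y]
  have : 0 ≤ (1 : Matrix (Fin d) (Fin d) ℝ) x y := by
    simp [Matrix.one_apply]; split <;> norm_num
  nlinarith [this]

end Mker

/-- Weighted `L₄(ρ)` bound on `G^π = (I - γP̂)⁻¹ γ(P - P̂)` (Lemma 8):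
`‖G^π v‖_{4,ρ} ≤ (γ/(1-γ)) √(Ĉ^π(ρ) χ²_ρ(P‖P̂)) ‖v‖_{4,ρ}`. -/
theorem G_L4_bound {d : ℕ} (γ : ℝ) (hγ0 : 0 < γ) (hγ1 : γ < 1)
    (P Phat : Matrix (Fin d) (Fin d) ℝ)
    (hP : RowStochastic P) (hPhat : RowStochastic Phat)
    (ρ : Fin d → ℝ) (hρpos : ∀ x, 0 < ρ x) (hρsum : ∑ x, ρ x = 1)
    (habs : ∀ x y, Phat x y ≠ P x y → 0 < Phat x y)
    (v : Fin d → ℝ) :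
    norm4 ρ (((1 - γ • Phat)⁻¹ * (γ • (P - Phat))).mulVec v) ≤
      γ / (1 - γ) * Real.sqrt (Real.sqrt (Csq γ Phat ρ) * chiSq ρ P Phat) *
        norm4 ρ v := by
  have hgap : 0 < 1 - γ := by linarith
  rcases Nat.eq_zero_or_pos d with hd | hd
  · subst hd; simp at hρsum
  haveI : Nonempty (Fin d) := Fin.pos_iff_nonempty.mp hd
  set M := Mker γ Phat with hMdef
  have hM0 : ∀ x y, 0 ≤ M x y := mker_nonneg hγ0 hγ1 hPhat
  -- local abbreviations
  set w : Fin d → ℝ := (P - Phat).mulVec v with hwdef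
  set χf : Fin d → ℝ := fun z => ∑ y, (Phat z y - P z y) ^ 2 / Phat z y with hχdef
  set Sf : Fin d → ℝ := fun z => ∑ y, Phat z y * v y ^ 2 with hSdef
  set Rf : Fin d → ℝ := fun x => ⨆ y, eta γ Phat x y / ρ y with hRdef
  set Cχ : ℝ := ∑ z, ρ z * χf z with hCχdef
  set N4 : ℝ := ∑ y, ρ y * v y ^ 4 with hN4def
  have hχf0 : ∀ z, 0 ≤ χf z := fun z =>
    Finset.sum_nonneg fun y _ => div_nonneg (sq_nonneg _) (hPhat.1 z y)
  have hSf0 : ∀ z, 0 ≤ Sf z := fun z =>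
    Finset.sum_nonneg fun y _ => mul_nonneg (hPhat.1 z y) (sq_nonneg _)
  have hN40 : 0 ≤ N4 :=
    Finset.sum_nonneg fun y _ => mul_nonneg (hρpos y).le (by positivity)
  have hCχ0 : 0 ≤ Cχ :=
    Finset.sum_nonneg fun z _ => mul_nonneg (hρpos z).le (hχf0 z)
  have heta : ∀ x y, eta γ Phat x y = (1 - γ) * M x y := fun x y => rfl
  have hRx : ∀ x y, eta γ Phat x y / ρ y ≤ Rf x := by
    intro x y
    have h1 : eta γ Phat x y / ρ y ≤ ⨆ y, eta γ Phat x y / ρ y :=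
      le_ciSup (Finite.bddAbove_range fun y => eta γ Phat x y / ρ y) y
    rw [hRdef]
    exact h1
  have hη_le : ∀ x y, M x y ≤ Rf x * ρ y / (1 - γ) := by
    intro x y
    have h1 : eta γ Phat x y / ρ y ≤ Rf x := hRx x y
    have h2 : eta γ Phat x y ≤ Rf x * ρ y := by
      rw [div_le_iff₀ (hρpos y)] at h1; linarith
    rw [heta] at h2
    rw [le_div_iff₀ hgap]; linarith
  have hR0 : ∀ x, 0 ≤ Rf x := by
    intro x
    have h1 : eta γ Phat x x / ρ x ≤ Rf x := hRx x x
    have : 0 ≤ eta γ Phat x x / ρ x := by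
      rw [heta]
      exact div_nonneg (mul_nonneg hgap.le (hM0 x x)) (hρpos x).le
    linarith
  -- Cauchy-Schwarz row-wise: w z ^ 2 ≤ χf z * Sf z
  have hw_sq : ∀ z, w z ^ 2 ≤ χf z * Sf z := by
    intro z
    set f : Fin d → ℝ := fun y =>
      if Phat z y = 0 then 0 else (P z y - Phat z y) / Real.sqrt (Phat z y)
      with hfdef
    set g : Fin d → ℝ := fun y => Real.sqrt (Phat z y) * v y with hgdef
    have hw_eq : w z = ∑ y, f y * g y := by
      rw [hwdef]
      simp only [Matrix.mulVec, dotProduct, Matrix.sub_apply]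
      refine Finset.sum_congr rfl fun y _ => ?_
      by_cases h : Phat z y = 0
      · have hpe : Phat z y = P z y := by
          by_contra hne; exact absurd (habs z y hne) (by simp [h])
        simp [hfdef, h, ← hpe]
      · have hpos : 0 < Phat z y := lt_of_le_of_ne (hPhat.1 z y) (Ne.symm h)
        have hs : Real.sqrt (Phat z y) ≠ 0 := by positivity
        simp only [hfdef, hgdef, if_neg h]
        field_simp
    have hf_sq : ∀ y, f y ^ 2 = (Phat z y - P z y) ^ 2 / Phat z y := by
      intro y
      by_cases h : Phat z y = 0
      · simp [hfdef, h]
      · have hpos : 0 < Phat z y := lt_of_le_of_ne (hPhat.1 z y) (Ne.symm h)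
        simp only [hfdef, if_neg h]
        rw [div_pow, Real.sq_sqrt (hPhat.1 z y)]
        congr 1; ring
    have hg_sq : ∀ y, g y ^ 2 = Phat z y * v y ^ 2 := by
      intro y
      simp only [hgdef]
      rw [mul_pow, Real.sq_sqrt (hPhat.1 z y)]
    calc w z ^ 2 = (∑ y, f y * g y) ^ 2 := by rw [hw_eq]
      _ ≤ (∑ y, f y ^ 2) * ∑ y, g y ^ 2 :=
          Finset.sum_mul_sq_le_sq_mul_sq _ _ _
      _ = χf z * Sf z := by
          rw [Finset.sum_congr rfl fun y _ => hf_sq y,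
            Finset.sum_congr rfl fun y _ => hg_sq y]
  have hw_abs : ∀ z, |w z| ≤ Real.sqrt (χf z * Sf z) := by
    intro z
    rw [← Real.sqrt_sq_eq_abs]
    exact Real.sqrt_le_sqrt (hw_sq z)
  -- formula for G v
  have hGv : (((1 - γ • Phat)⁻¹ * (γ • (P - Phat))).mulVec v)
      = fun x => γ * ∑ z, M x z * w z := by
    funext x
    rw [mker_inv hγ0 hγ1 hPhat, ← Matrix.mulVec_mulVec,
      Matrix.smul_mulVec, ← hMdef, ← hwdef]
    simp only [Matrix.mulVec, dotProduct, Pi.smul_apply, smul_eq_mul,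
      Finset.mul_sum]
    exact Finset.sum_congr rfl fun z _ => by ring
  set T : Fin d → ℝ := fun x => ∑ z, M x z * Real.sqrt (χf z * Sf z) with hTdef
  set A : Fin d → ℝ := fun x => ∑ z, M x z * χf z with hAdef
  set U : Fin d → ℝ := fun x => ∑ z, M x z * Sf z with hUdef
  set V : Fin d → ℝ := fun x => ∑ y, M x y * v y ^ 2 with hVdef
  set F4 : Fin d → ℝ := fun x => ∑ y, M x y * v y ^ 4 with hF4def
  have hA0 : ∀ x, 0 ≤ A x := fun x =>
    Finset.sum_nonneg fun z _ => mul_nonneg (hM0 x z) (hχf0 z)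
  have hU0 : ∀ x, 0 ≤ U x := fun x =>
    Finset.sum_nonneg fun z _ => mul_nonneg (hM0 x z) (hSf0 z)
  have hV0 : ∀ x, 0 ≤ V x := fun x =>
    Finset.sum_nonneg fun y _ => mul_nonneg (hM0 x y) (sq_nonneg _)
  have habsT : ∀ x, |∑ z, M x z * w z| ≤ T x := by
    intro x
    calc |∑ z, M x z * w z| ≤ ∑ z, |M x z * w z| :=
          Finset.abs_sum_le_sum_abs _ _
      _ ≤ T x := by
          refine Finset.sum_le_sum fun z _ => ?_
          rw [abs_mul, abs_of_nonneg (hM0 x z)]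
          exact mul_le_mul_of_nonneg_left (hw_abs z) (hM0 x z)
  have hT_sq : ∀ x, T x ^ 2 ≤ A x * U x := by
    intro x
    have key : ∀ z, M x z * Real.sqrt (χf z * Sf z)
        = (Real.sqrt (M x z) * Real.sqrt (χf z))
          * (Real.sqrt (M x z) * Real.sqrt (Sf z)) := by
      intro z
      rw [Real.sqrt_mul (hχf0 z)]
      have : Real.sqrt (M x z) * Real.sqrt (M x z) = M x z :=
        Real.mul_self_sqrt (hM0 x z)
      calc M x z * (Real.sqrt (χf z) * Real.sqrt (Sf z))
          = (Real.sqrt (M x z) * Real.sqrt (M x z))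
            * (Real.sqrt (χf z) * Real.sqrt (Sf z)) := by rw [this]
        _ = _ := by ring
    calc T x ^ 2 = (∑ z, (Real.sqrt (M x z) * Real.sqrt (χf z))
          * (Real.sqrt (M x z) * Real.sqrt (Sf z))) ^ 2 := by
          rw [hTdef]; congr 1; exact Finset.sum_congr rfl fun z _ => key z
      _ ≤ (∑ z, (Real.sqrt (M x z) * Real.sqrt (χf z)) ^ 2)
          * ∑ z, (Real.sqrt (M x z) * Real.sqrt (Sf z)) ^ 2 :=
          Finset.sum_mul_sq_le_sq_mul_sq _ _ _
      _ = A x * U x := by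
          congr 1
          · refine Finset.sum_congr rfl fun z _ => ?_
            rw [mul_pow, Real.sq_sqrt (hM0 x z), Real.sq_sqrt (hχf0 z)]
          · refine Finset.sum_congr rfl fun z _ => ?_
            rw [mul_pow, Real.sq_sqrt (hM0 x z), Real.sq_sqrt (hSf0 z)]
  have hU_le : ∀ x, U x ≤ V x / γ := by
    intro x
    have swap : U x = ∑ y, (∑ z, M x z * Phat z y) * v y ^ 2 := by
      rw [hUdef]
      simp only [hSdef, Finset.mul_sum, Finset.sum_mul]
      rw [Finset.sum_comm]
      exact Finset.sum_congr rfl fun y _ =>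
        Finset.sum_congr rfl fun z _ => by ring
    rw [swap, hVdef, Finset.sum_div]
    refine Finset.sum_le_sum fun y _ => ?_
    refine le_trans (mul_le_mul_of_nonneg_right
      (mker_phat_le hγ0 hγ1 hPhat x y) (sq_nonneg (v y))) (le_of_eq ?_)
    ring
  have hV_sq : ∀ x, V x ^ 2 ≤ (1 - γ)⁻¹ * F4 x := by
    intro x
    have key : ∀ y, M x y * v y ^ 2
        = Real.sqrt (M x y) * (Real.sqrt (M x y) * v y ^ 2) := by
      intro y
      rw [← mul_assoc, Real.mul_self_sqrt (hM0 x y)]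
    calc V x ^ 2
        = (∑ y, Real.sqrt (M x y) * (Real.sqrt (M x y) * v y ^ 2)) ^ 2 := by
          rw [hVdef]; congr 1; exact Finset.sum_congr rfl fun y _ => key y
      _ ≤ (∑ y, Real.sqrt (M x y) ^ 2) * ∑ y, (Real.sqrt (M x y) * v y ^ 2) ^ 2 :=
          Finset.sum_mul_sq_le_sq_mul_sq _ _ _
      _ = (1 - γ)⁻¹ * F4 x := by
          congr 1
          · rw [← mker_rowsum hγ0 hγ1 hPhat x]
            exact Finset.sum_congr rfl fun y _ => Real.sq_sqrt (hM0 x y)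
          · refine Finset.sum_congr rfl fun y _ => ?_
            rw [mul_pow, Real.sq_sqrt (hM0 x y)]; ring
  have hF4_le : ∀ x, F4 x ≤ Rf x * N4 / (1 - γ) := by
    intro x
    have : ∀ y, M x y * v y ^ 4 ≤ Rf x * ρ y / (1 - γ) * v y ^ 4 := by
      intro y
      exact mul_le_mul_of_nonneg_right (hη_le x y) (by positivity)
    calc F4 x ≤ ∑ y, Rf x * ρ y / (1 - γ) * v y ^ 4 :=
          Finset.sum_le_sum fun y _ => this y
      _ = Rf x * N4 / (1 - γ) := by
          rw [hN4def, Finset.mul_sum, Finset.sum_div]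
          exact Finset.sum_congr rfl fun y _ => by ring
  have hA_le : ∀ x, A x ≤ Rf x * Cχ / (1 - γ) := by
    intro x
    have : ∀ z, M x z * χf z ≤ Rf x * ρ z / (1 - γ) * χf z := by
      intro z
      exact mul_le_mul_of_nonneg_right (hη_le x z) (hχf0 z)
    calc A x ≤ ∑ z, Rf x * ρ z / (1 - γ) * χf z :=
          Finset.sum_le_sum fun z _ => this z
      _ = Rf x * Cχ / (1 - γ) := by
          rw [hCχdef, Finset.mul_sum, Finset.sum_div]
          exact Finset.sum_congr rfl fun z _ => by ring
  -- per-x fourth power bound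
  have key4 : ∀ x, (γ * ∑ z, M x z * w z) ^ 4
      ≤ γ ^ 2 / (1 - γ) ^ 4 * Rf x ^ 3 * Cχ ^ 2 * N4 := by
    intro x
    set a : ℝ := ∑ z, M x z * w z with hadef
    have ha2 : a ^ 2 ≤ A x * U x := by
      have h1 : a ^ 2 ≤ T x ^ 2 := by
        have := habsT x
        have h' := abs_le.mp this
        nlinarith [abs_nonneg a, this]
      exact h1.trans (hT_sq x)
    have ha4 : a ^ 4 ≤ (A x * U x) ^ 2 := by
      calc a ^ 4 = (a ^ 2) ^ 2 := by ring
        _ ≤ (A x * U x) ^ 2 := by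
            exact pow_le_pow_left₀ (sq_nonneg a) ha2 2
    have hAU : (A x * U x) ^ 2 ≤ (Rf x * Cχ / (1 - γ)) ^ 2 * (V x ^ 2 / γ ^ 2) := by
      have h1 : A x ^ 2 ≤ (Rf x * Cχ / (1 - γ)) ^ 2 :=
        pow_le_pow_left₀ (hA0 x) (hA_le x) 2
      have h2 : U x ^ 2 ≤ (V x / γ) ^ 2 :=
        pow_le_pow_left₀ (hU0 x) (hU_le x) 2
      calc (A x * U x) ^ 2 = A x ^ 2 * U x ^ 2 := by ring
        _ ≤ (Rf x * Cχ / (1 - γ)) ^ 2 * (V x / γ) ^ 2 :=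
            mul_le_mul h1 h2 (by positivity) (by positivity)
        _ = (Rf x * Cχ / (1 - γ)) ^ 2 * (V x ^ 2 / γ ^ 2) := by
            ring
    have hV2 : V x ^ 2 ≤ Rf x * N4 / (1 - γ) ^ 2 := by
      calc V x ^ 2 ≤ (1 - γ)⁻¹ * F4 x := hV_sq x
        _ ≤ (1 - γ)⁻¹ * (Rf x * N4 / (1 - γ)) :=
            mul_le_mul_of_nonneg_left (hF4_le x) (by positivity)
        _ = Rf x * N4 / (1 - γ) ^ 2 := by
            rw [inv_mul_eq_div, div_div, ← sq]
    have hfin : a ^ 4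
        ≤ (Rf x * Cχ / (1 - γ)) ^ 2 * ((Rf x * N4 / (1 - γ) ^ 2) / γ ^ 2) := by
      refine ha4.trans (hAU.trans ?_)
      gcongr
    calc (γ * a) ^ 4 = γ ^ 4 * a ^ 4 := by ring
      _ ≤ γ ^ 4 * ((Rf x * Cχ / (1 - γ)) ^ 2
            * ((Rf x * N4 / (1 - γ) ^ 2) / γ ^ 2)) :=
          mul_le_mul_of_nonneg_left hfin (by positivity)
      _ = γ ^ 2 / (1 - γ) ^ 4 * Rf x ^ 3 * Cχ ^ 2 * N4 := by
          field_simp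
  -- sum up
  have hsum4 : ∑ x, ρ x * (γ * ∑ z, M x z * w z) ^ 4
      ≤ γ ^ 4 / (1 - γ) ^ 4 * Csq γ Phat ρ * Cχ ^ 2 * N4 := by
    have hstep : ∑ x, ρ x * (γ * ∑ z, M x z * w z) ^ 4
        ≤ ∑ x, ρ x * (γ ^ 2 / (1 - γ) ^ 4 * Rf x ^ 3 * Cχ ^ 2 * N4) :=
      Finset.sum_le_sum fun x _ =>
        mul_le_mul_of_nonneg_left (key4 x) (hρpos x).le
    have hCsq : Csq γ Phat ρ = 1 / γ ^ 2 * ∑ x, ρ x * Rf x ^ 3 := rfl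
    calc ∑ x, ρ x * (γ * ∑ z, M x z * w z) ^ 4
        ≤ ∑ x, ρ x * (γ ^ 2 / (1 - γ) ^ 4 * Rf x ^ 3 * Cχ ^ 2 * N4) := hstep
      _ = (∑ x, ρ x * Rf x ^ 3) * (γ ^ 2 / (1 - γ) ^ 4 * Cχ ^ 2 * N4) := by
          rw [Finset.sum_mul]
          exact Finset.sum_congr rfl fun x _ => by ring
      _ = γ ^ 4 / (1 - γ) ^ 4 * Csq γ Phat ρ * Cχ ^ 2 * N4 := by
          rw [hCsq]; field_simp
  -- conclude
  have hCsq0 : 0 ≤ Csq γ Phat ρ := by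
    have : 0 ≤ ∑ x, ρ x * Rf x ^ 3 :=
      Finset.sum_nonneg fun x _ =>
        mul_nonneg (hρpos x).le (pow_nonneg (hR0 x) 3)
    have hrfl : Csq γ Phat ρ = 1 / γ ^ 2 * ∑ x, ρ x * Rf x ^ 3 := rfl
    rw [hrfl]; positivity
  have hchiSq : chiSq ρ P Phat = Cχ := rfl
  set c : ℝ := γ / (1 - γ) * Real.sqrt (Real.sqrt (Csq γ Phat ρ) * Cχ)
      * N4 ^ ((1 : ℝ) / 4) with hcdef
  have hc0 : 0 ≤ c := by
    rw [hcdef]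
    exact mul_nonneg (mul_nonneg (div_nonneg hγ0.le hgap.le)
      (Real.sqrt_nonneg _)) (Real.rpow_nonneg hN40 _)
  have hc4 : c ^ 4 = γ ^ 4 / (1 - γ) ^ 4 * Csq γ Phat ρ * Cχ ^ 2 * N4 := by
    rw [hcdef]
    have h1 : (Real.sqrt (Real.sqrt (Csq γ Phat ρ) * Cχ)) ^ 4
        = Csq γ Phat ρ * Cχ ^ 2 := by
      have hnn : 0 ≤ Real.sqrt (Csq γ Phat ρ) * Cχ :=
        mul_nonneg (Real.sqrt_nonneg _) hCχ0
      calc (Real.sqrt (Real.sqrt (Csq γ Phat ρ) * Cχ)) ^ 4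
          = ((Real.sqrt (Real.sqrt (Csq γ Phat ρ) * Cχ)) ^ 2) ^ 2 := by ring
        _ = (Real.sqrt (Csq γ Phat ρ) * Cχ) ^ 2 := by rw [Real.sq_sqrt hnn]
        _ = Real.sqrt (Csq γ Phat ρ) ^ 2 * Cχ ^ 2 := by ring
        _ = Csq γ Phat ρ * Cχ ^ 2 := by rw [Real.sq_sqrt hCsq0]
    have h2 : (N4 ^ ((1 : ℝ) / 4)) ^ (4 : ℕ) = N4 := by
      rw [← Real.rpow_natCast (N4 ^ ((1 : ℝ) / 4)) 4, ← Real.rpow_mul hN40]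
      norm_num
    rw [mul_pow, mul_pow, h1, h2, div_pow]
    ring
  -- final
  rw [hGv, hchiSq]
  have hnv : norm4 ρ v = N4 ^ ((1 : ℝ) / 4) := rfl
  have hL0 : 0 ≤ ∑ x, ρ x * (γ * ∑ z, M x z * w z) ^ 4 :=
    Finset.sum_nonneg fun x _ => mul_nonneg (hρpos x).le (by positivity)
  show (∑ x, ρ x * (γ * ∑ z, M x z * w z) ^ 4) ^ ((1 : ℝ) / 4)
      ≤ γ / (1 - γ) * Real.sqrt (Real.sqrt (Csq γ Phat ρ) * Cχ) * norm4 ρ v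
  rw [hnv]
  calc (∑ x, ρ x * (γ * ∑ z, M x z * w z) ^ 4) ^ ((1 : ℝ) / 4)
      ≤ (c ^ 4) ^ ((1 : ℝ) / 4) :=
        Real.rpow_le_rpow hL0 (hsum4.trans_eq hc4.symm) (by norm_num)
    _ = c := by
        rw [← Real.rpow_natCast c 4, ← Real.rpow_mul hc0]
        norm_num
    _ = γ / (1 - γ) * Real.sqrt (Real.sqrt (Csq γ Phat ρ) * Cχ)
          * N4 ^ ((1 : ℝ) / 4) := hcdef
end

section
/- (Approximate OS-VI for policy evaluation, L_4(ρ) error propagation) If V_k = S^π V_{k-1} + ε_k with ‖ε_k‖_{4,ρ} ≤ ε for all k ≥ 1, and γ' = (γ/(1-γ)) √(Ĉ^π(ρ) χ²_ρ(P^π ‖ P̂^π)) < 1, then for all k ≥ 0: ‖V^π - V_k‖_{4,ρ} ≤ γ'^k ‖V^π - V_0‖_{4,ρ} + ((1-γ'^k)/(1-γ')) ε. -/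
open Matrix

/-! ### Auxiliary lemmas -/

section Aux

variable {d : ℕ} {γ : ℝ} {Q : Matrix (Fin d) (Fin d) ℝ}

lemma row_pow (hQ : RowStochastic Q) (t : ℕ) :
    (∀ x y, 0 ≤ (Q ^ t) x y) ∧ ∀ x, ∑ y, (Q ^ t) x y = 1 := by
  induction t with
  | zero =>
    refine ⟨fun x y => ?_, fun x => ?_⟩
    · rw [pow_zero, Matrix.one_apply]; split <;> norm_num
    · rw [pow_zero]; simp [Matrix.one_apply]
  | succ t ih =>
    refine ⟨fun x y => ?_, fun x => ?_⟩
    · rw [pow_succ, Matrix.mul_apply]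
      exact Finset.sum_nonneg fun z _ => mul_nonneg (ih.1 x z) (hQ.1 z y)
    · simp only [pow_succ, Matrix.mul_apply]
      rw [Finset.sum_comm]
      calc ∑ z, ∑ y, (Q ^ t) x z * Q z y
          = ∑ z, (Q ^ t) x z * ∑ y, Q z y := by
            exact Finset.sum_congr rfl fun z _ => (Finset.mul_sum _ _ _).symm
        _ = 1 := by
            simp only [hQ.2]
            simpa using ih.2 x

lemma pow_entry_le_one (hQ : RowStochastic Q) (t : ℕ) (x y : Fin d) :
    (Q ^ t) x y ≤ 1 := by
  calc (Q ^ t) x y ≤ ∑ y', (Q ^ t) x y' :=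
        Finset.single_le_sum (fun z _ => (row_pow hQ t).1 x z) (Finset.mem_univ y)
    _ = 1 := (row_pow hQ t).2 x

lemma summable_ser (hQ : RowStochastic Q) (hγ0 : 0 ≤ γ) (hγ1 : γ < 1) (x y : Fin d) :
    Summable fun t : ℕ => γ ^ t * (Q ^ t) x y :=
  Summable.of_nonneg_of_le
    (fun t => mul_nonneg (pow_nonneg hγ0 t) ((row_pow hQ t).1 x y))
    (fun t => mul_le_of_le_one_right (pow_nonneg hγ0 t) (pow_entry_le_one hQ t x y))
    (summable_geometric_of_lt_one hγ0 hγ1)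

/-- The Neumann series `∑ γ^t Q^t` of a matrix. -/
noncomputable def Nmat {d : ℕ} (γ : ℝ) (Q : Matrix (Fin d) (Fin d) ℝ) :
    Matrix (Fin d) (Fin d) ℝ :=
  Matrix.of fun x y => ∑' t : ℕ, γ ^ t * (Q ^ t) x y

lemma Nmat_apply (x y : Fin d) : Nmat γ Q x y = ∑' t : ℕ, γ ^ t * (Q ^ t) x y := rfl

lemma Nmat_nonneg (hQ : RowStochastic Q) (hγ0 : 0 ≤ γ) (x y : Fin d) :
    0 ≤ Nmat γ Q x y :=
  tsum_nonneg fun t => mul_nonneg (pow_nonneg hγ0 t) ((row_pow hQ t).1 x y)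

lemma tail_eq (hQ : RowStochastic Q) (hγ0 : 0 ≤ γ) (hγ1 : γ < 1) (x y : Fin d) :
    ∑' t : ℕ, γ ^ (t + 1) * (Q ^ (t + 1)) x y
      = Nmat γ Q x y - (1 : Matrix (Fin d) (Fin d) ℝ) x y := by
  have h0 := Summable.tsum_eq_zero_add (summable_ser hQ hγ0 hγ1 x y)
  rw [Nmat_apply]
  have : γ ^ 0 * (Q ^ 0) x y = (1 : Matrix (Fin d) (Fin d) ℝ) x y := by
    simp
  rw [h0, this]
  ring

lemma smulQ_mul_Nmat (hQ : RowStochastic Q) (hγ0 : 0 ≤ γ) (hγ1 : γ < 1) :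
    (γ • Q) * Nmat γ Q = Nmat γ Q - 1 := by
  ext x y
  rw [Matrix.mul_apply]
  have hsummand : ∀ z : Fin d, Summable fun t : ℕ => γ ^ (t + 1) * (Q x z * (Q ^ t) z y) := by
    intro z
    refine ((summable_ser hQ hγ0 hγ1 z y).mul_left (γ * Q x z)).congr fun t => ?_
    ring
  calc ∑ z, (γ • Q) x z * Nmat γ Q z y
      = ∑ z, ∑' t : ℕ, γ ^ (t + 1) * (Q x z * (Q ^ t) z y) := by
        refine Finset.sum_congr rfl fun z _ => ?_
        rw [Matrix.smul_apply, smul_eq_mul, Nmat_apply, ← tsum_mul_left]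
        exact tsum_congr fun t => by ring
    _ = ∑' t : ℕ, ∑ z, γ ^ (t + 1) * (Q x z * (Q ^ t) z y) :=
        (Summable.tsum_finsetSum fun z _ => hsummand z).symm
    _ = ∑' t : ℕ, γ ^ (t + 1) * (Q ^ (t + 1)) x y := by
        refine tsum_congr fun t => ?_
        rw [← Finset.mul_sum, show (Q ^ (t + 1) : Matrix (Fin d) (Fin d) ℝ) = Q * Q ^ t from pow_succ' Q t, Matrix.mul_apply]
    _ = Nmat γ Q x y - (1 : Matrix (Fin d) (Fin d) ℝ) x y := tail_eq hQ hγ0 hγ1 x y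
    _ = (Nmat γ Q - 1) x y := by simp [Matrix.sub_apply]

lemma Nmat_mul_smulQ (hQ : RowStochastic Q) (hγ0 : 0 ≤ γ) (hγ1 : γ < 1) :
    Nmat γ Q * (γ • Q) = Nmat γ Q - 1 := by
  ext x y
  rw [Matrix.mul_apply]
  have hsummand : ∀ z : Fin d, Summable fun t : ℕ => γ ^ (t + 1) * ((Q ^ t) x z * Q z y) := by
    intro z
    refine ((summable_ser hQ hγ0 hγ1 x z).mul_left (γ * Q z y)).congr fun t => ?_
    ring
  calc ∑ z, Nmat γ Q x z * (γ • Q) z y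
      = ∑ z, ∑' t : ℕ, γ ^ (t + 1) * ((Q ^ t) x z * Q z y) := by
        refine Finset.sum_congr rfl fun z _ => ?_
        rw [Matrix.smul_apply, smul_eq_mul, Nmat_apply, ← tsum_mul_right]
        exact tsum_congr fun t => by ring
    _ = ∑' t : ℕ, ∑ z, γ ^ (t + 1) * ((Q ^ t) x z * Q z y) :=
        (Summable.tsum_finsetSum fun z _ => hsummand z).symm
    _ = ∑' t : ℕ, γ ^ (t + 1) * (Q ^ (t + 1)) x y := by
        refine tsum_congr fun t => ?_
        rw [← Finset.mul_sum, show (Q ^ (t + 1) : Matrix (Fin d) (Fin d) ℝ) = Q ^ t * Q from pow_succ Q t, Matrix.mul_apply]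
    _ = Nmat γ Q x y - (1 : Matrix (Fin d) (Fin d) ℝ) x y := tail_eq hQ hγ0 hγ1 x y
    _ = (Nmat γ Q - 1) x y := by simp [Matrix.sub_apply]

lemma one_sub_mul_Nmat (hQ : RowStochastic Q) (hγ0 : 0 ≤ γ) (hγ1 : γ < 1) :
    (1 - γ • Q) * Nmat γ Q = 1 := by
  rw [sub_mul, one_mul, smulQ_mul_Nmat hQ hγ0 hγ1, sub_sub_cancel]

lemma Nmat_mul_one_sub (hQ : RowStochastic Q) (hγ0 : 0 ≤ γ) (hγ1 : γ < 1) :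
    Nmat γ Q * (1 - γ • Q) = 1 := by
  rw [mul_sub, mul_one, Nmat_mul_smulQ hQ hγ0 hγ1, sub_sub_cancel]

lemma inv_one_sub_eq (hQ : RowStochastic Q) (hγ0 : 0 ≤ γ) (hγ1 : γ < 1) :
    (1 - γ • Q)⁻¹ = Nmat γ Q :=
  Matrix.inv_eq_right_inv (one_sub_mul_Nmat hQ hγ0 hγ1)

lemma Nmat_row (hQ : RowStochastic Q) (hγ0 : 0 ≤ γ) (hγ1 : γ < 1) (x : Fin d) :
    ∑ y, Nmat γ Q x y = (1 - γ)⁻¹ := by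
  have : ∑ y, Nmat γ Q x y = ∑' t : ℕ, ∑ y, γ ^ t * (Q ^ t) x y :=
    (Summable.tsum_finsetSum fun y _ => summable_ser hQ hγ0 hγ1 x y).symm
  rw [this]
  have : ∀ t : ℕ, ∑ y, γ ^ t * (Q ^ t) x y = γ ^ t := by
    intro t
    rw [← Finset.mul_sum, (row_pow hQ t).2 x, mul_one]
  rw [tsum_congr this, tsum_geometric_of_lt_one hγ0 hγ1]

lemma Nmat_step (hQ : RowStochastic Q) (hγ0 : 0 ≤ γ) (hγ1 : γ < 1) (x z : Fin d) :
    γ * ∑ y, Nmat γ Q x y * Q y z ≤ Nmat γ Q x z := by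
  have h : (Nmat γ Q * (γ • Q)) x z = (Nmat γ Q - 1) x z := by
    rw [Nmat_mul_smulQ hQ hγ0 hγ1]
  rw [Matrix.mul_apply, Matrix.sub_apply] at h
  have h1 : (0 : ℝ) ≤ (1 : Matrix (Fin d) (Fin d) ℝ) x z := by
    rw [Matrix.one_apply]; split <;> norm_num
  have h2 : ∑ y, Nmat γ Q x y * (γ • Q) y z = γ * ∑ y, Nmat γ Q x y * Q y z := by
    rw [Finset.mul_sum]
    exact Finset.sum_congr rfl fun y _ => by
      rw [Matrix.smul_apply, smul_eq_mul]; ring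
  rw [h2] at h
  linarith

lemma norm4_nonneg {ρ f : Fin d → ℝ} (hρ : ∀ x, 0 ≤ ρ x) : 0 ≤ norm4 ρ f :=
  Real.rpow_nonneg
    (Finset.sum_nonneg fun x _ =>
      mul_nonneg (hρ x) (Even.pow_nonneg (by decide) _)) _

lemma norm4_sub_le {ρ : Fin d → ℝ} (hρ : ∀ x, 0 ≤ ρ x) (f g : Fin d → ℝ) :
    norm4 ρ (f - g) ≤ norm4 ρ f + norm4 ρ g := by
  have conv : ∀ h : Fin d → ℝ,
      (∑ x, ρ x * h x ^ 4) = ∑ x, |ρ x ^ ((1:ℝ)/4) * h x| ^ (4:ℝ) := by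
    intro h
    refine Finset.sum_congr rfl fun x _ => ?_
    have habs4 : ∀ a : ℝ, |a| ^ (4:ℝ) = a ^ (4:ℕ) := by
      intro a
      rw [show (4:ℝ) = ((4:ℕ):ℝ) by norm_num, Real.rpow_natCast, Even.pow_abs (by decide)]
    have hq : (ρ x ^ ((1:ℝ)/4)) ^ (4:ℕ) = ρ x := by
      rw [← Real.rpow_natCast (ρ x ^ ((1:ℝ)/4)) 4, ← Real.rpow_mul (hρ x)]
      norm_num
    rw [habs4, mul_pow, hq]
  have lp := Real.Lp_add_le (s := Finset.univ)
      (f := fun x => ρ x ^ ((1:ℝ)/4) * f x)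
      (g := fun x => -(ρ x ^ ((1:ℝ)/4) * g x)) (p := 4) (by norm_num)
  simp only [← sub_eq_add_neg, abs_neg] at lp
  calc norm4 ρ (f - g)
      = (∑ x, |ρ x ^ ((1:ℝ)/4) * f x - ρ x ^ ((1:ℝ)/4) * g x| ^ (4:ℝ)) ^ ((1:ℝ)/4) := by
        rw [norm4, conv (f - g)]
        congr 1
        refine Finset.sum_congr rfl fun x _ => ?_
        rw [Pi.sub_apply, mul_sub]
    _ ≤ (∑ x, |ρ x ^ ((1:ℝ)/4) * f x| ^ (4:ℝ)) ^ ((1:ℝ)/4)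
        + (∑ x, |ρ x ^ ((1:ℝ)/4) * g x| ^ (4:ℝ)) ^ ((1:ℝ)/4) := lp
    _ = norm4 ρ f + norm4 ρ g := by rw [norm4, norm4, conv f, conv g]

end Aux

/-- Approximate OS-VI for policy evaluation, `L₄(ρ)` error propagation
(Theorem 1, `⋆ = 4,ρ`). -/
theorem osvi_pe_error_propagation_L4 {d : ℕ} (γ : ℝ) (hγ0 : 0 < γ) (hγ1 : γ < 1)
    (P Phat : Matrix (Fin d) (Fin d) ℝ)
    (hP : RowStochastic P) (hPhat : RowStochastic Phat)
    (ρ : Fin d → ℝ) (hρpos : ∀ x, 0 < ρ x) (hρsum : ∑ x, ρ x = 1)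
    (habs : ∀ x y, Phat x y ≠ P x y → 0 < Phat x y)
    (r : Fin d → ℝ)
    (V : ℕ → Fin d → ℝ) (ε : ℕ → Fin d → ℝ) (e : ℝ)
    (hV : ∀ k, V (k + 1) = varga γ P Phat r (V k) + ε (k + 1))
    (hε : ∀ k, 1 ≤ k → norm4 ρ (ε k) ≤ e)
    (γ' : ℝ)
    (hγ'def : γ' = γ / (1 - γ) * Real.sqrt (Real.sqrt (Csq γ Phat ρ) * chiSq ρ P Phat))
    (hγ'lt : γ' < 1) :
    ∀ k, norm4 ρ (valueFn γ P r - V k) ≤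
      γ' ^ k * norm4 ρ (valueFn γ P r - V 0) + (1 - γ' ^ k) / (1 - γ') * e := by
  have hγ1' : (0:ℝ) < 1 - γ := by linarith
  have hγ'0 : 0 ≤ γ' := by
    rw [hγ'def]
    exact mul_nonneg (div_nonneg hγ0.le hγ1'.le) (Real.sqrt_nonneg _)
  set N := Nmat γ Phat with hN
  set NP := Nmat γ P with hNPdef
  have hNinv : (1 - γ • Phat)⁻¹ = N := inv_one_sub_eq hPhat hγ0.le hγ1
  have hNPinv : (1 - γ • P)⁻¹ = NP := inv_one_sub_eq hP hγ0.le hγ1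
  set Vp := valueFn γ P r with hVpdef
  -- fixed point of the Varga operator
  have hVpfix : (1 - γ • P) *ᵥ Vp = r := by
    rw [hVpdef, valueFn, hNPinv, Matrix.mulVec_mulVec,
      one_sub_mul_Nmat hP hγ0.le hγ1, Matrix.one_mulVec]
  have hfix : Vp = N *ᵥ (r + γ • ((P - Phat) *ᵥ Vp)) := by
    have h2 : (1 - γ • Phat) *ᵥ Vp = r + γ • ((P - Phat) *ᵥ Vp) := by
      have e1 : (1 - γ • P) *ᵥ Vp = Vp - γ • (P *ᵥ Vp) := by
        rw [Matrix.sub_mulVec, Matrix.one_mulVec, Matrix.smul_mulVec]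
      have e2 : (1 - γ • Phat) *ᵥ Vp = Vp - γ • (Phat *ᵥ Vp) := by
        rw [Matrix.sub_mulVec, Matrix.one_mulVec, Matrix.smul_mulVec]
      rw [e1] at hVpfix
      rw [e2, Matrix.sub_mulVec, smul_sub, ← hVpfix]
      abel
    rw [← h2, Matrix.mulVec_mulVec, Nmat_mul_one_sub hPhat hγ0.le hγ1, Matrix.one_mulVec]
  have hdiff : ∀ W, Vp - varga γ P Phat r W = N *ᵥ (γ • ((P - Phat) *ᵥ (Vp - W))) := by
    intro W
    have hsub : (r + γ • ((P - Phat) *ᵥ Vp)) - (r + γ • ((P - Phat) *ᵥ W))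
        = γ • ((P - Phat) *ᵥ (Vp - W)) := by
      rw [Matrix.mulVec_sub, smul_sub]
      abel
    rw [varga, hNinv]
    nth_rewrite 1 [hfix]
    rw [← hsub, Matrix.mulVec_sub]
  -- concentrability quantities
  have heta_nn : ∀ x y, 0 ≤ eta γ Phat x y := fun x y =>
    mul_nonneg hγ1'.le
      (tsum_nonneg fun t => mul_nonneg (pow_nonneg hγ0.le t) ((row_pow hPhat t).1 x y))
  set c : Fin d → ℝ := fun x => ⨆ y, eta γ Phat x y / ρ y with hcdef
  have hcub : ∀ x y, eta γ Phat x y ≤ c x * ρ y := by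
    intro x y
    have h := le_ciSup (Finite.bddAbove_range fun y => eta γ Phat x y / ρ y) y
    exact (div_le_iff₀ (hρpos y)).mp h
  have hc0 : ∀ x, 0 ≤ c x := fun x =>
    le_trans (div_nonneg (heta_nn x x) (hρpos x).le)
      (le_ciSup (Finite.bddAbove_range fun y => eta γ Phat x y / ρ y) x)
  have hN0 : ∀ x y, (0:ℝ) ≤ N x y := fun x y => Nmat_nonneg hPhat hγ0.le x y
  have hNc : ∀ x y, N x y ≤ c x * ρ y / (1 - γ) := by
    intro x y
    rw [le_div_iff₀ hγ1']
    have heq : eta γ Phat x y = (1 - γ) * N x y := rfl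
    calc N x y * (1 - γ) = eta γ Phat x y := by rw [heq]; ring
      _ ≤ c x * ρ y := hcub x y
  have hNrow : ∀ x, ∑ y, N x y = (1 - γ)⁻¹ := Nmat_row hPhat hγ0.le hγ1
  have hC0 : 0 ≤ Csq γ Phat ρ := by
    rw [Csq]
    exact mul_nonneg (by positivity)
      (Finset.sum_nonneg fun x _ => mul_nonneg (hρpos x).le (pow_nonneg (hc0 x) 3))
  -- the key contraction estimate
  have key : ∀ w : Fin d → ℝ,
      norm4 ρ (N *ᵥ (γ • ((P - Phat) *ᵥ w))) ≤ γ' * norm4 ρ w := by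
    intro w
    set χf : Fin d → ℝ := fun y => ∑ z, (Phat y z - P y z) ^ 2 / Phat y z with hχf
    set mf : Fin d → ℝ := fun y => ∑ z, Phat y z * w z ^ 2 with hmf
    set Δf : Fin d → ℝ := fun y => ∑ z, (P y z - Phat y z) * w z with hΔf
    set X := chiSq ρ P Phat with hX
    set W4 := ∑ z, ρ z * w z ^ 4 with hW4
    set u : Fin d → ℝ := fun x => ∑ y, N x y * (γ * Δf y) with hu
    have hueq : (N *ᵥ (γ • ((P - Phat) *ᵥ w))) = u := by
      funext x
      simp only [hu, Matrix.mulVec, dotProduct, Pi.smul_apply, smul_eq_mul,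
        Matrix.sub_apply, hΔf]
    have hχ0 : ∀ y, 0 ≤ χf y := fun y =>
      Finset.sum_nonneg fun z _ => div_nonneg (sq_nonneg _) (hPhat.1 y z)
    have hm0 : ∀ y, 0 ≤ mf y := fun y =>
      Finset.sum_nonneg fun z _ => mul_nonneg (hPhat.1 y z) (sq_nonneg _)
    have hXsum : X = ∑ y, ρ y * χf y := rfl
    have hX0 : 0 ≤ X := by
      rw [hXsum]
      exact Finset.sum_nonneg fun x _ => mul_nonneg (hρpos x).le (hχ0 x)
    have hW40 : 0 ≤ W4 :=
      Finset.sum_nonneg fun z _ => mul_nonneg (hρpos z).le (Even.pow_nonneg (by decide) _)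
    have hSχ0 : ∀ x, 0 ≤ ∑ y, N x y * χf y := fun x =>
      Finset.sum_nonneg fun y _ => mul_nonneg (hN0 x y) (hχ0 y)
    have hSm0 : ∀ x, 0 ≤ ∑ y, N x y * mf y := fun x =>
      Finset.sum_nonneg fun y _ => mul_nonneg (hN0 x y) (hm0 y)
    -- step A: per-row Cauchy-Schwarz against the chi-square
    have stepA : ∀ y, Δf y ^ 2 ≤ χf y * mf y := by
      intro y
      have hterm : ∀ z, (P y z - Phat y z) * w z
          = -(((Phat y z - P y z) / Real.sqrt (Phat y z)) * (Real.sqrt (Phat y z) * w z)) := by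
        intro z
        by_cases hz : Phat y z = 0
        · have hPz : P y z = 0 := by
            by_contra hne
            have hne' : Phat y z ≠ P y z := by rw [hz]; exact fun h => hne h.symm
            have := habs y z hne'
            rw [hz] at this
            exact lt_irrefl 0 this
          simp [hz, hPz]
        · have hpos : 0 < Phat y z := (hPhat.1 y z).lt_of_ne (Ne.symm hz)
          have hs : Real.sqrt (Phat y z) ≠ 0 := by positivity
          field_simp
          ring
      have hΔeq : Δf y = -(∑ z, ((Phat y z - P y z) / Real.sqrt (Phat y z))
          * (Real.sqrt (Phat y z) * w z)) := by
        rw [hΔf, ← Finset.sum_neg_distrib]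
        exact Finset.sum_congr rfl fun z _ => hterm z
      calc Δf y ^ 2
          = (∑ z, ((Phat y z - P y z) / Real.sqrt (Phat y z))
              * (Real.sqrt (Phat y z) * w z)) ^ 2 := by rw [hΔeq, neg_sq]
        _ ≤ (∑ z, ((Phat y z - P y z) / Real.sqrt (Phat y z)) ^ 2)
            * ∑ z, (Real.sqrt (Phat y z) * w z) ^ 2 :=
            Finset.sum_mul_sq_le_sq_mul_sq _ _ _
        _ = χf y * mf y := by
            congr 1
            · refine Finset.sum_congr rfl fun z _ => ?_
              rw [div_pow, Real.sq_sqrt (hPhat.1 y z)]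
            · refine Finset.sum_congr rfl fun z _ => ?_
              rw [mul_pow, Real.sq_sqrt (hPhat.1 y z)]
    -- step B: Cauchy-Schwarz over the discounted occupancy
    have stepB : ∀ x, u x ^ 2 ≤ γ ^ 2 * ((∑ y, N x y * χf y) * ∑ y, N x y * mf y) := by
      intro x
      have h1 : u x = γ * ∑ y, N x y * Δf y := by
        rw [hu, Finset.mul_sum]
        exact Finset.sum_congr rfl fun y _ => by ring
      have habsd : ∀ y, N x y * |Δf y|
          ≤ Real.sqrt (N x y * χf y) * Real.sqrt (N x y * mf y) := by
        intro y
        rw [← Real.sqrt_mul (mul_nonneg (hN0 x y) (hχ0 y))]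
        have e1 : N x y * χf y * (N x y * mf y) = N x y ^ 2 * (χf y * mf y) := by ring
        rw [e1]
        have e2 : N x y * |Δf y| = Real.sqrt (N x y ^ 2 * Δf y ^ 2) := by
          rw [Real.sqrt_mul (sq_nonneg _), Real.sqrt_sq (hN0 x y), Real.sqrt_sq_eq_abs]
        rw [e2]
        exact Real.sqrt_le_sqrt (mul_le_mul_of_nonneg_left (stepA y) (sq_nonneg _))
      have hT : |∑ y, N x y * Δf y|
          ≤ ∑ y, Real.sqrt (N x y * χf y) * Real.sqrt (N x y * mf y) := by
        refine le_trans (Finset.abs_sum_le_sum_abs _ _) (Finset.sum_le_sum fun y _ => ?_)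
        rw [abs_mul, abs_of_nonneg (hN0 x y)]
        exact habsd y
      have hT2 : (∑ y, N x y * Δf y) ^ 2 ≤ (∑ y, N x y * χf y) * ∑ y, N x y * mf y := by
        calc (∑ y, N x y * Δf y) ^ 2 = |∑ y, N x y * Δf y| ^ 2 := (sq_abs _).symm
          _ ≤ (∑ y, Real.sqrt (N x y * χf y) * Real.sqrt (N x y * mf y)) ^ 2 :=
              pow_le_pow_left₀ (abs_nonneg _) hT 2
          _ ≤ (∑ y, Real.sqrt (N x y * χf y) ^ 2) * ∑ y, Real.sqrt (N x y * mf y) ^ 2 :=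
              Finset.sum_mul_sq_le_sq_mul_sq _ _ _
          _ = (∑ y, N x y * χf y) * ∑ y, N x y * mf y := by
              congr 1
              · exact Finset.sum_congr rfl fun y _ =>
                  Real.sq_sqrt (mul_nonneg (hN0 x y) (hχ0 y))
              · exact Finset.sum_congr rfl fun y _ =>
                  Real.sq_sqrt (mul_nonneg (hN0 x y) (hm0 y))
      calc u x ^ 2 = γ ^ 2 * (∑ y, N x y * Δf y) ^ 2 := by rw [h1, mul_pow]
        _ ≤ γ ^ 2 * ((∑ y, N x y * χf y) * ∑ y, N x y * mf y) :=
            mul_le_mul_of_nonneg_left hT2 (sq_nonneg γ)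
    -- step C1
    have stepC1 : ∀ x, ∑ y, N x y * χf y ≤ c x * X / (1 - γ) := by
      intro x
      calc ∑ y, N x y * χf y ≤ ∑ y, (c x * ρ y / (1 - γ)) * χf y :=
          Finset.sum_le_sum fun y _ => mul_le_mul_of_nonneg_right (hNc x y) (hχ0 y)
        _ = c x * (∑ y, ρ y * χf y) / (1 - γ) := by
            rw [Finset.mul_sum, Finset.sum_div]
            exact Finset.sum_congr rfl fun y _ => by ring
        _ = c x * X / (1 - γ) := by rw [← hXsum]
    -- step C2
    have stepC2 : ∀ x, (∑ y, N x y * mf y) ^ 2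
        ≤ (1 - γ)⁻¹ * (c x / (γ * (1 - γ)) * W4) := by
      intro x
      have CS : (∑ y, N x y * mf y) ^ 2 ≤ (∑ y, N x y) * ∑ y, N x y * mf y ^ 2 := by
        calc (∑ y, N x y * mf y) ^ 2
            = (∑ y, Real.sqrt (N x y) * (Real.sqrt (N x y) * mf y)) ^ 2 := by
              congr 1
              exact Finset.sum_congr rfl fun y _ => by
                rw [← mul_assoc, Real.mul_self_sqrt (hN0 x y)]
          _ ≤ (∑ y, Real.sqrt (N x y) ^ 2) * ∑ y, (Real.sqrt (N x y) * mf y) ^ 2 :=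
              Finset.sum_mul_sq_le_sq_mul_sq _ _ _
          _ = (∑ y, N x y) * ∑ y, N x y * mf y ^ 2 := by
              congr 1
              · exact Finset.sum_congr rfl fun y _ => Real.sq_sqrt (hN0 x y)
              · exact Finset.sum_congr rfl fun y _ => by
                  rw [mul_pow, Real.sq_sqrt (hN0 x y)]
      have hm2 : ∀ y, mf y ^ 2 ≤ ∑ z, Phat y z * w z ^ 4 := by
        intro y
        calc mf y ^ 2
            = (∑ z, Real.sqrt (Phat y z) * (Real.sqrt (Phat y z) * w z ^ 2)) ^ 2 := by
              congr 1
              exact Finset.sum_congr rfl fun z _ => by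
                rw [← mul_assoc, Real.mul_self_sqrt (hPhat.1 y z)]
          _ ≤ (∑ z, Real.sqrt (Phat y z) ^ 2) * ∑ z, (Real.sqrt (Phat y z) * w z ^ 2) ^ 2 :=
              Finset.sum_mul_sq_le_sq_mul_sq _ _ _
          _ = (∑ z, Phat y z) * ∑ z, Phat y z * (w z ^ 2) ^ 2 := by
              congr 1
              · exact Finset.sum_congr rfl fun z _ => Real.sq_sqrt (hPhat.1 y z)
              · exact Finset.sum_congr rfl fun z _ => by
                  rw [mul_pow, Real.sq_sqrt (hPhat.1 y z)]
          _ = ∑ z, Phat y z * w z ^ 4 := by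
              rw [hPhat.2 y, one_mul]
              exact Finset.sum_congr rfl fun z _ => by ring
      have hinner : ∑ y, N x y * mf y ^ 2 ≤ c x / (γ * (1 - γ)) * W4 := by
        calc ∑ y, N x y * mf y ^ 2
            ≤ ∑ y, N x y * ∑ z, Phat y z * w z ^ 4 :=
              Finset.sum_le_sum fun y _ => mul_le_mul_of_nonneg_left (hm2 y) (hN0 x y)
          _ = ∑ z, (∑ y, N x y * Phat y z) * w z ^ 4 := by
              simp_rw [Finset.mul_sum]
              rw [Finset.sum_comm]
              refine Finset.sum_congr rfl fun z _ => ?_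
              rw [Finset.sum_mul]
              exact Finset.sum_congr rfl fun y _ => by ring
          _ ≤ ∑ z, N x z / γ * w z ^ 4 := by
              refine Finset.sum_le_sum fun z _ => ?_
              refine mul_le_mul_of_nonneg_right ?_ (Even.pow_nonneg (by decide) _)
              rw [le_div_iff₀ hγ0]
              calc (∑ y, N x y * Phat y z) * γ = γ * ∑ y, N x y * Phat y z := by ring
                _ ≤ N x z := Nmat_step hPhat hγ0.le hγ1 x z
          _ ≤ ∑ z, c x * ρ z / ((1 - γ) * γ) * w z ^ 4 := by
              refine Finset.sum_le_sum fun z _ => ?_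
              refine mul_le_mul_of_nonneg_right ?_ (Even.pow_nonneg (by decide) _)
              rw [div_le_div_iff₀ hγ0 (by positivity)]
              have h := hNc x z
              rw [le_div_iff₀ hγ1'] at h
              nlinarith [hγ0.le]
          _ = c x / (γ * (1 - γ)) * W4 := by
              rw [hW4, Finset.mul_sum]
              refine Finset.sum_congr rfl fun z _ => ?_
              field_simp
      calc (∑ y, N x y * mf y) ^ 2 ≤ (∑ y, N x y) * ∑ y, N x y * mf y ^ 2 := CS
        _ = (1 - γ)⁻¹ * ∑ y, N x y * mf y ^ 2 := by rw [hNrow x]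
        _ ≤ (1 - γ)⁻¹ * (c x / (γ * (1 - γ)) * W4) :=
            mul_le_mul_of_nonneg_left hinner (by positivity)
    -- combine
    have per : ∀ x, u x ^ 4 ≤ γ ^ 3 / (1 - γ) ^ 4 * (c x ^ 3 * (X ^ 2 * W4)) := by
      intro x
      have h4 : u x ^ 4 ≤ (γ ^ 2 * ((∑ y, N x y * χf y) * ∑ y, N x y * mf y)) ^ 2 := by
        calc u x ^ 4 = (u x ^ 2) ^ 2 := by ring
          _ ≤ _ := pow_le_pow_left₀ (sq_nonneg _) (stepB x) 2
      refine le_trans h4 ?_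
      have e1 : (γ ^ 2 * ((∑ y, N x y * χf y) * ∑ y, N x y * mf y)) ^ 2
          = γ ^ 4 * ((∑ y, N x y * χf y) ^ 2 * (∑ y, N x y * mf y) ^ 2) := by ring
      rw [e1]
      have hSχ : (∑ y, N x y * χf y) ^ 2 ≤ (c x * X / (1 - γ)) ^ 2 :=
        pow_le_pow_left₀ (hSχ0 x) (stepC1 x) 2
      calc γ ^ 4 * ((∑ y, N x y * χf y) ^ 2 * (∑ y, N x y * mf y) ^ 2)
          ≤ γ ^ 4 * ((c x * X / (1 - γ)) ^ 2 * ((1 - γ)⁻¹ * (c x / (γ * (1 - γ)) * W4))) := by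
            refine mul_le_mul_of_nonneg_left ?_ (by positivity)
            exact mul_le_mul hSχ (stepC2 x) (sq_nonneg _) (sq_nonneg _)
        _ = γ ^ 3 / (1 - γ) ^ 4 * (c x ^ 3 * (X ^ 2 * W4)) := by
            field_simp
    have hsum4 : ∑ x, ρ x * u x ^ 4 ≤ γ' ^ 4 * W4 := by
      have hcs : ∑ x, ρ x * c x ^ 3 = γ ^ 2 * Csq γ Phat ρ := by
        rw [Csq]
        have hcρ : (∑ x, ρ x * (⨆ y, eta γ Phat x y / ρ y) ^ 3) = ∑ x, ρ x * c x ^ 3 := rfl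
        rw [hcρ]
        field_simp
      have hγ'4 : γ' ^ 4 = γ ^ 4 / (1 - γ) ^ 4 * (Csq γ Phat ρ * X ^ 2) := by
        rw [hγ'def]
        have hs0 : 0 ≤ Real.sqrt (Csq γ Phat ρ) * X := mul_nonneg (Real.sqrt_nonneg _) hX0
        rw [mul_pow, div_pow]
        congr 1
        rw [show (4:ℕ) = 2 * 2 from rfl, pow_mul,
          Real.sq_sqrt (hX ▸ hs0), mul_pow, Real.sq_sqrt hC0]
      calc ∑ x, ρ x * u x ^ 4
          ≤ ∑ x, ρ x * (γ ^ 3 / (1 - γ) ^ 4 * (c x ^ 3 * (X ^ 2 * W4))) :=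
            Finset.sum_le_sum fun x _ => mul_le_mul_of_nonneg_left (per x) (hρpos x).le
        _ = γ ^ 3 / (1 - γ) ^ 4 * (X ^ 2 * W4) * ∑ x, ρ x * c x ^ 3 := by
            rw [Finset.mul_sum Finset.univ (fun x => ρ x * c x ^ 3)
              (γ ^ 3 / (1 - γ) ^ 4 * (X ^ 2 * W4))]
            exact Finset.sum_congr rfl fun x _ => by ring
        _ = γ ^ 5 / (1 - γ) ^ 4 * (Csq γ Phat ρ * X ^ 2 * W4) := by
            rw [hcs]; ring
        _ ≤ γ ^ 4 / (1 - γ) ^ 4 * (Csq γ Phat ρ * X ^ 2 * W4) := by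
            have h5 : γ ^ 5 ≤ γ ^ 4 := pow_le_pow_of_le_one hγ0.le hγ1.le (by norm_num)
            have hnn : 0 ≤ Csq γ Phat ρ * X ^ 2 * W4 :=
              mul_nonneg (mul_nonneg hC0 (sq_nonneg _)) hW40
            have hd4 : (0:ℝ) < (1 - γ) ^ 4 := by positivity
            apply mul_le_mul_of_nonneg_right _ hnn
            exact (div_le_div_iff_of_pos_right hd4).mpr h5
        _ = γ' ^ 4 * W4 := by rw [hγ'4]; ring
    -- conclude
    rw [hueq]
    have hsum_nn : 0 ≤ ∑ x, ρ x * u x ^ 4 :=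
      Finset.sum_nonneg fun x _ => mul_nonneg (hρpos x).le (Even.pow_nonneg (by decide) _)
    have h1 : norm4 ρ u ≤ (γ' ^ 4 * W4) ^ ((1:ℝ)/4) := by
      rw [norm4]
      exact Real.rpow_le_rpow hsum_nn hsum4 (by norm_num)
    refine le_trans h1 ?_
    rw [Real.mul_rpow (by positivity) hW40]
    have h2 : ((γ' ^ 4 : ℝ)) ^ ((1:ℝ)/4) = γ' := by
      rw [← Real.rpow_natCast γ' 4, ← Real.rpow_mul hγ'0]
      norm_num
    rw [h2, norm4]
  -- error recursion and induction
  have hD0 : ∀ f : Fin d → ℝ, 0 ≤ norm4 ρ f := fun f => norm4_nonneg fun x => (hρpos x).le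
  have he0 : 0 ≤ e := le_trans (hD0 (ε 1)) (hε 1 le_rfl)
  have hrec : ∀ k, norm4 ρ (Vp - V (k + 1)) ≤ γ' * norm4 ρ (Vp - V k) + e := by
    intro k
    have e1 : Vp - V (k + 1) = (Vp - varga γ P Phat r (V k)) - ε (k + 1) := by
      rw [hV k, sub_add_eq_sub_sub]
    rw [e1]
    refine le_trans (norm4_sub_le (fun x => (hρpos x).le) _ _)
      (add_le_add ?_ (hε (k + 1) (by omega)))
    rw [hdiff (V k)]
    exact key _
  intro k
  induction k with
  | zero => simp
  | succ k ih =>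
    have h3 : γ' * norm4 ρ (Vp - V k) + e
        ≤ γ' * (γ' ^ k * norm4 ρ (Vp - V 0) + (1 - γ' ^ k) / (1 - γ') * e) + e :=
      add_le_add_left (mul_le_mul_of_nonneg_left ih hγ'0) e
    refine le_trans (hrec k) (le_trans h3 (le_of_eq ?_))
    have hne : (1:ℝ) - γ' ≠ 0 := by linarith
    field_simp
    ring
end
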